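/- Let N ≥ 2, Γ a real symmetric irreducible N×N matrix with nonnegative off-diagonal entries and zero row sums, and Λ_d = diag(Λ₁,…,Λ_N) with all Λ_j ≥ 0 and at least one Λ_{j₀} > 0. Define Λ_∞ = inf over X ∈ ℝ^N with X_j ≥ 0 for all j and ‖X‖₂ = 1 of ⟨(-Γ + Λ_d)X, X⟩. Then Λ_∞ > 0. -/
import Mathlib

open Real

/-- Positivity of the decay rate: with `Γ` a symmetric irreducible generator matrix,
`Λ_j ≥ 0` with some `Λ_{j₀} > 0`, the infimum over the nonnegative unit sphere of
`⟨(-Γ + Λ_d)X, X⟩` is positive. -/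
theorem stmt_8 (N : ℕ) (hN : 2 ≤ N) (Γ : Matrix (Fin N) (Fin N) ℝ) (Λ : Fin N → ℝ)
    (hsym : Γ.IsSymm)
    (hoff : ∀ j l, j ≠ l → 0 ≤ Γ j l)
    (hrow : ∀ j, ∑ l, Γ j l = 0)
    (hirr : ∀ S : Set (Fin N), S.Nonempty → Sᶜ.Nonempty →
      ∃ j ∈ S, ∃ l ∈ Sᶜ, Γ j l ≠ 0)
    (hΛ : ∀ j, 0 ≤ Λ j) (j₀ : Fin N) (hj₀ : 0 < Λ j₀) :
    0 < sInf { r : ℝ | ∃ X : Fin N → ℝ, (∀ j, 0 ≤ X j) ∧ (∑ j, X j ^ 2 = 1) ∧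
      r = (∑ j, ∑ l, (-Γ j l) * X j * X l) + ∑ j, Λ j * X j ^ 2 } := by
  set f : (Fin N → ℝ) → ℝ := fun X =>
    (∑ j, ∑ l, (-Γ j l) * X j * X l) + ∑ j, Λ j * X j ^ 2 with hf
  set S : Set (Fin N → ℝ) := {X | (∀ j, 0 ≤ X j) ∧ ∑ j, X j ^ 2 = 1} with hS
  have hsym' : ∀ j l, Γ j l = Γ l j := by
    intro j l
    exact Matrix.IsSymm.apply hsym l j
  -- key identity
  have key : ∀ X : Fin N → ℝ, ∑ j, ∑ l, (-Γ j l) * X j * X l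
      = (1/2) * ∑ j, ∑ l, Γ j l * (X j - X l) ^ 2 := by
    intro X
    have h1 : ∑ j, ∑ l, Γ j l * X j ^ 2 = 0 := by
      apply Finset.sum_eq_zero; intro j _
      rw [← Finset.sum_mul, hrow, zero_mul]
    have h2 : ∑ j, ∑ l, Γ j l * X l ^ 2 = 0 := by
      rw [Finset.sum_comm]
      apply Finset.sum_eq_zero; intro l _
      have hc : ∑ j, Γ j l = 0 := by
        rw [Finset.sum_congr rfl fun j _ => hsym' j l]; exact hrow l
      rw [← Finset.sum_mul, hc, zero_mul]
    have h3 : ∑ j, ∑ l, Γ j l * (X j - X l) ^ 2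
        = (∑ j, ∑ l, Γ j l * X j ^ 2) + (∑ j, ∑ l, Γ j l * X l ^ 2)
          + 2 * ∑ j, ∑ l, (-Γ j l) * X j * X l := by
      rw [Finset.mul_sum, ← Finset.sum_add_distrib, ← Finset.sum_add_distrib]
      apply Finset.sum_congr rfl; intro j _
      rw [Finset.mul_sum, ← Finset.sum_add_distrib, ← Finset.sum_add_distrib]
      apply Finset.sum_congr rfl; intro l _
      ring
    rw [h1, h2] at h3
    linarith [h3]
  -- nonnegativity of each quadratic term
  have hterm : ∀ (X : Fin N → ℝ) (j l : Fin N), 0 ≤ Γ j l * (X j - X l) ^ 2 := by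
    intro X j l
    rcases eq_or_ne j l with rfl | h
    · simp
    · exact mul_nonneg (hoff j l h) (sq_nonneg _)
  -- pointwise positivity on S
  have hpos : ∀ X ∈ S, 0 < f X := by
    intro X hX
    obtain ⟨hX0, hX1⟩ := hX
    have hA : 0 ≤ ∑ j, ∑ l, Γ j l * (X j - X l) ^ 2 :=
      Finset.sum_nonneg fun j _ => Finset.sum_nonneg fun l _ => hterm X j l
    have hB : 0 ≤ ∑ j, Λ j * X j ^ 2 :=
      Finset.sum_nonneg fun j _ => mul_nonneg (hΛ j) (sq_nonneg _)
    have hfX : f X = (1/2) * (∑ j, ∑ l, Γ j l * (X j - X l) ^ 2) + ∑ j, Λ j * X j ^ 2 := by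
      rw [hf]; simp only []; rw [key X]
    by_contra hle
    push_neg at hle
    have hf0 : f X = 0 := le_antisymm hle (by rw [hfX]; positivity)
    have hA0 : ∑ j, ∑ l, Γ j l * (X j - X l) ^ 2 = 0 := by
      rw [hfX] at hf0; linarith
    have hB0 : ∑ j, Λ j * X j ^ 2 = 0 := by
      rw [hfX] at hf0; linarith
    -- X j₀ = 0
    have hXj₀ : X j₀ = 0 := by
      have := (Finset.sum_eq_zero_iff_of_nonneg
        (fun j _ => mul_nonneg (hΛ j) (sq_nonneg (X j)))).mp hB0 j₀ (Finset.mem_univ _)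
      have h2 : X j₀ ^ 2 = 0 := by
        rcases mul_eq_zero.mp this with h | h
        · exact absurd h (ne_of_gt hj₀)
        · exact h
      exact pow_eq_zero_iff (by norm_num) |>.mp h2
    -- all quadratic terms vanish
    have hall : ∀ j l, Γ j l * (X j - X l) ^ 2 = 0 := by
      intro j l
      have hrowz := (Finset.sum_eq_zero_iff_of_nonneg
        (fun j _ => Finset.sum_nonneg fun l _ => hterm X j l)).mp hA0 j (Finset.mem_univ _)
      exact (Finset.sum_eq_zero_iff_of_nonneg
        (fun l _ => hterm X j l)).mp hrowz l (Finset.mem_univ _)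
    -- some coordinate is nonzero
    have hex : ∃ k, X k ≠ 0 := by
      by_contra hall0
      push_neg at hall0
      have : (∑ j, X j ^ 2) = 0 := by
        apply Finset.sum_eq_zero; intro j _; rw [hall0 j]; ring
      rw [hX1] at this; norm_num at this
    obtain ⟨k, hk⟩ := hex
    -- irreducibility contradiction
    obtain ⟨j, hjmem, l, hlmem, hΓjl⟩ :=
      hirr {j | X j = 0} ⟨j₀, hXj₀⟩ ⟨k, hk⟩
    have hXl : X l ≠ 0 := hlmem
    have := hall j l
    rcases mul_eq_zero.mp this with h | h
    · exact hΓjl h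
    · have : X j = X l := by
        have := pow_eq_zero_iff (n := 2) (by norm_num) |>.mp h
        linarith [this]
      apply hXl
      rw [← this]; exact hjmem
  -- S is compact
  have hScomp : IsCompact S := by
    have hsub : S ⊆ Set.pi Set.univ (fun _ : Fin N => Set.Icc (0:ℝ) 1) := by
      intro X ⟨hX0, hX1⟩ j _
      refine ⟨hX0 j, ?_⟩
      have hle : X j ^ 2 ≤ 1 := by
        rw [← hX1]
        exact Finset.single_le_sum (fun i _ => sq_nonneg (X i)) (Finset.mem_univ j)
      nlinarith [hX0 j]
    have hclosed : IsClosed S := by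
      have h1 : IsClosed {X : Fin N → ℝ | ∀ j, 0 ≤ X j} := by
        have : {X : Fin N → ℝ | ∀ j, 0 ≤ X j} = ⋂ j, (fun X : Fin N → ℝ => X j) ⁻¹' Set.Ici 0 := by
          ext X; simp
        rw [this]
        exact isClosed_iInter fun j => (isClosed_Ici).preimage (continuous_apply j)
      have h2 : IsClosed {X : Fin N → ℝ | ∑ j, X j ^ 2 = 1} :=
        isClosed_eq (by fun_prop) continuous_const
      have : S = {X : Fin N → ℝ | ∀ j, 0 ≤ X j} ∩ {X : Fin N → ℝ | ∑ j, X j ^ 2 = 1} := by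
        ext X; simp [hS, Set.mem_setOf_eq]
      rw [this]
      exact h1.inter h2
    exact (isCompact_univ_pi fun _ => isCompact_Icc).of_isClosed_subset hclosed hsub
  -- f is continuous
  have hfc : Continuous f := by fun_prop
  -- S is nonempty
  have heS : (fun j => if j = j₀ then (1:ℝ) else 0) ∈ S := by
    constructor
    · intro j; by_cases h : j = j₀ <;> simp [h]
    · have : ∀ j : Fin N, (if j = j₀ then (1:ℝ) else 0) ^ 2 = if j = j₀ then 1 else 0 := by
        intro j; by_cases h : j = j₀ <;> simp [h]
      simp_rw [this]
      simp
  obtain ⟨X₀, hX₀S, hmin⟩ := hScomp.exists_isMinOn ⟨_, heS⟩ hfc.continuousOn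
  refine lt_of_lt_of_le (hpos X₀ hX₀S) (le_csInf ?_ ?_)
  · exact ⟨f _, _, heS.1, heS.2, rfl⟩
  · rintro r ⟨X, hX0, hX1, rfl⟩
    exact hmin (⟨hX0, hX1⟩ : X ∈ S)
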